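/- Let H ≥ 1, let M be a positive stochastic H×H real matrix, and suppose that the powers M^μ converge entrywise as μ → ∞ to a matrix M̄. Then for every pair of indices i, j, the entry (M(x))ᵢⱼ of M(x) := (exp(xM) − I)/(eˣ − 1) converges to M̄ᵢⱼ as x → +∞. -/

import Mathlib

open Matrix Filter

private lemma wsum (x : ℝ) :
    Summable (fun n : ℕ => x ^ (n + 1) / (Nat.factorial (n + 1) : ℝ)) :=
  (summable_nat_add_iff 1).2 (Real.summable_pow_div_factorial x)

private lemma exp_sub_one_eq (x : ℝ) :
    (∑' n : ℕ, x ^ (n + 1) / (Nat.factorial (n + 1) : ℝ)) = Real.exp x - 1 := by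
  have hexp : Real.exp x = ∑' n : ℕ, x ^ n / (Nat.factorial n : ℝ) := by
    rw [Real.exp_eq_exp_ℝ, NormedSpace.exp_eq_tsum_div]
  have h := Summable.tsum_eq_zero_add (Real.summable_pow_div_factorial x)
  rw [hexp, h]
  simp

private lemma hpoly_aux (k : ℕ) :
    Tendsto (fun x : ℝ => (Real.exp x - 1)⁻¹ * x ^ k) atTop (nhds 0) := by
  have h1 : Tendsto (fun x : ℝ => x ^ k * Real.exp (-x)) atTop (nhds 0) :=
    Real.tendsto_pow_mul_exp_neg_atTop_nhds_zero k
  have h2 : Tendsto (fun x : ℝ => (1 - Real.exp (-x))⁻¹) atTop (nhds 1) := by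
    have h2a : Tendsto (fun x : ℝ => 1 - Real.exp (-x)) atTop (nhds 1) := by
      simpa using tendsto_const_nhds.sub Real.tendsto_exp_neg_atTop_nhds_zero
    simpa using h2a.inv₀ one_ne_zero
  have h3 := h1.mul h2
  rw [zero_mul] at h3
  refine h3.congr' ?_
  filter_upwards [eventually_gt_atTop (0 : ℝ)] with x hx
  have hE : (0 : ℝ) < Real.exp x - 1 := sub_pos.2 (by simpa using Real.exp_lt_exp.2 hx)
  have h4 : Real.exp x ≠ 0 := (Real.exp_pos x).ne'
  rw [Real.exp_neg]
  field_simp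

set_option maxHeartbeats 1000000 in
private lemma key0 (b : ℕ → ℝ) (C : ℝ) (hb0 : ∀ n, 0 ≤ b n) (hbC : ∀ n, b n ≤ C)
    (hb : Tendsto b atTop (nhds 0)) :
    Tendsto (fun x : ℝ =>
        (Real.exp x - 1)⁻¹ * ∑' n : ℕ, x ^ (n + 1) / (Nat.factorial (n + 1) : ℝ) * b n)
      atTop (nhds 0) := by
  rw [Metric.tendsto_nhds]
  intro ε hε
  obtain ⟨N, hN⟩ := eventually_atTop.1 (hb.eventually (gt_mem_nhds (half_pos hε)))
  have hQ : Tendsto (fun x : ℝ => (Real.exp x - 1)⁻¹ *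
      ∑ n ∈ Finset.range N, x ^ (n + 1) / (Nat.factorial (n + 1) : ℝ) * C) atTop (nhds 0) := by
    have heq : ∀ x : ℝ, (Real.exp x - 1)⁻¹ *
        ∑ n ∈ Finset.range N, x ^ (n + 1) / (Nat.factorial (n + 1) : ℝ) * C
        = ∑ n ∈ Finset.range N,
            (C / (Nat.factorial (n + 1) : ℝ)) * ((Real.exp x - 1)⁻¹ * x ^ (n + 1)) := by
      intro x
      rw [Finset.mul_sum]
      refine Finset.sum_congr rfl fun n _ => by ring
    have hsum := tendsto_finset_sum (Finset.range N)
      (fun n (_ : n ∈ Finset.range N) =>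
        (hpoly_aux (n + 1)).const_mul (C / (Nat.factorial (n + 1) : ℝ)))
    simp only [mul_zero, Finset.sum_const_zero] at hsum
    exact hsum.congr fun x => (heq x).symm
  filter_upwards [eventually_gt_atTop (0 : ℝ), hQ.eventually (gt_mem_nhds (half_pos hε))]
    with x hx0 hxQ
  have hE : (0 : ℝ) < Real.exp x - 1 := sub_pos.2 (by simpa using Real.exp_lt_exp.2 hx0)
  have hw : ∀ n : ℕ, (0 : ℝ) ≤ x ^ (n + 1) / (Nat.factorial (n + 1) : ℝ) := fun n =>
    div_nonneg (pow_nonneg hx0.le _) (Nat.cast_nonneg _)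
  have hWsum := wsum x
  have hsum : Summable (fun n : ℕ => x ^ (n + 1) / (Nat.factorial (n + 1) : ℝ) * b n) :=
    Summable.of_nonneg_of_le (fun n => mul_nonneg (hw n) (hb0 n))
      (fun n => mul_le_mul_of_nonneg_left (hbC n) (hw n)) (hWsum.mul_right C)
  have hsplit := Summable.sum_add_tsum_nat_add
    (f := fun n => x ^ (n + 1) / (Nat.factorial (n + 1) : ℝ) * b n) N hsum
  have hwsplit := Summable.sum_add_tsum_nat_add
    (f := fun n => x ^ (n + 1) / (Nat.factorial (n + 1) : ℝ)) N hWsum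
  rw [exp_sub_one_eq] at hwsplit
  have hTail : (∑' n : ℕ, x ^ (n + N + 1) / (Nat.factorial (n + N + 1) : ℝ) * b (n + N))
      ≤ (Real.exp x - 1) * (ε / 2) := by
    have hsum' : Summable (fun n : ℕ =>
        x ^ (n + N + 1) / (Nat.factorial (n + N + 1) : ℝ) * b (n + N)) :=
      (summable_nat_add_iff N).2 hsum
    have hW' : Summable (fun n : ℕ => x ^ (n + N + 1) / (Nat.factorial (n + N + 1) : ℝ)) :=
      (summable_nat_add_iff N).2 hWsum
    calc (∑' n : ℕ, x ^ (n + N + 1) / (Nat.factorial (n + N + 1) : ℝ) * b (n + N))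
        ≤ ∑' n : ℕ, x ^ (n + N + 1) / (Nat.factorial (n + N + 1) : ℝ) * (ε / 2) :=
          Summable.tsum_le_tsum (fun n =>
            mul_le_mul_of_nonneg_left (hN _ le_add_self).le (hw (n + N))) hsum'
            (hW'.mul_right _)
      _ = (∑' n : ℕ, x ^ (n + N + 1) / (Nat.factorial (n + N + 1) : ℝ)) * (ε / 2) :=
          tsum_mul_right
      _ ≤ (Real.exp x - 1) * (ε / 2) := by
          have h3 : (0 : ℝ) ≤ ∑ n ∈ Finset.range N, x ^ (n + 1) / (Nat.factorial (n + 1) : ℝ) :=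
            Finset.sum_nonneg fun n _ => hw n
          have h4 : (0 : ℝ) < ε / 2 := half_pos hε
          nlinarith [hwsplit]
  have hP : (∑ n ∈ Finset.range N, x ^ (n + 1) / (Nat.factorial (n + 1) : ℝ) * b n)
      ≤ ∑ n ∈ Finset.range N, x ^ (n + 1) / (Nat.factorial (n + 1) : ℝ) * C :=
    Finset.sum_le_sum fun n _ => mul_le_mul_of_nonneg_left (hbC n) (hw n)
  have hS0 : (0 : ℝ) ≤ ∑' n : ℕ, x ^ (n + 1) / (Nat.factorial (n + 1) : ℝ) * b n :=
    tsum_nonneg fun n => mul_nonneg (hw n) (hb0 n)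
  rw [Real.dist_eq, sub_zero, abs_of_nonneg (mul_nonneg (inv_nonneg.2 hE.le) hS0)]
  have hinv : (0 : ℝ) ≤ (Real.exp x - 1)⁻¹ := inv_nonneg.2 hE.le
  have hSle : (∑' n : ℕ, x ^ (n + 1) / (Nat.factorial (n + 1) : ℝ) * b n)
      ≤ (∑ n ∈ Finset.range N, x ^ (n + 1) / (Nat.factorial (n + 1) : ℝ) * C)
          + (Real.exp x - 1) * (ε / 2) := by
    rw [← hsplit]
    exact add_le_add hP hTail
  calc (Real.exp x - 1)⁻¹ * ∑' n : ℕ, x ^ (n + 1) / (Nat.factorial (n + 1) : ℝ) * b n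
      ≤ (Real.exp x - 1)⁻¹ *
          ((∑ n ∈ Finset.range N, x ^ (n + 1) / (Nat.factorial (n + 1) : ℝ) * C)
            + (Real.exp x - 1) * (ε / 2)) := mul_le_mul_of_nonneg_left hSle hinv
    _ = (Real.exp x - 1)⁻¹ *
          (∑ n ∈ Finset.range N, x ^ (n + 1) / (Nat.factorial (n + 1) : ℝ) * C) + ε / 2 := by
        rw [mul_add, inv_mul_cancel_left₀ hE.ne']
    _ < ε / 2 + ε / 2 := by linarith
    _ = ε := add_halves ε

private lemma key1 (a : ℕ → ℝ) (C : ℝ) (hC : ∀ n, |a n| ≤ C) (L : ℝ)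
    (ha : Tendsto (fun n => a (n + 1)) atTop (nhds L)) :
    Tendsto (fun x : ℝ =>
        (Real.exp x - 1)⁻¹ * ∑' n : ℕ, x ^ (n + 1) / (Nat.factorial (n + 1) : ℝ) * a (n + 1))
      atTop (nhds L) := by
  have hb : Tendsto (fun n : ℕ => |a (n + 1) - L|) atTop (nhds 0) := by
    have := (ha.sub_const L).abs
    simpa using this
  have hb0 : ∀ n : ℕ, (0 : ℝ) ≤ |a (n + 1) - L| := fun n => abs_nonneg _
  have hbC : ∀ n : ℕ, |a (n + 1) - L| ≤ C + |L| := fun n => by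
    calc |a (n + 1) - L| ≤ |a (n + 1)| + |L| := by
          simpa [sub_eq_add_neg] using abs_add_le (a (n + 1)) (-L)
      _ ≤ C + |L| := add_le_add_left (hC _) _
  have h0 := key0 (fun n => |a (n + 1) - L|) (C + |L|) hb0 hbC hb
  rw [tendsto_iff_dist_tendsto_zero]
  refine squeeze_zero' (Filter.Eventually.of_forall fun x => dist_nonneg) ?_ h0
  filter_upwards [eventually_gt_atTop (0 : ℝ)] with x hx0
  have hE : (0 : ℝ) < Real.exp x - 1 := sub_pos.2 (by simpa using Real.exp_lt_exp.2 hx0)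
  have hw : ∀ n : ℕ, (0 : ℝ) ≤ x ^ (n + 1) / (Nat.factorial (n + 1) : ℝ) := fun n =>
    div_nonneg (pow_nonneg hx0.le _) (Nat.cast_nonneg _)
  have hWsum := wsum x
  have hsa : Summable (fun n : ℕ => x ^ (n + 1) / (Nat.factorial (n + 1) : ℝ) * a (n + 1)) := by
    refine Summable.of_norm_bounded (hWsum.mul_right C) fun n => ?_
    rw [Real.norm_eq_abs, abs_mul, abs_of_nonneg (hw n)]
    exact mul_le_mul_of_nonneg_left (hC _) (hw n)
  have hsb : Summable (fun n : ℕ =>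
      x ^ (n + 1) / (Nat.factorial (n + 1) : ℝ) * |a (n + 1) - L|) :=
    Summable.of_nonneg_of_le (fun n => mul_nonneg (hw n) (hb0 n))
      (fun n => mul_le_mul_of_nonneg_left (hbC n) (hw n)) (hWsum.mul_right (C + |L|))
  have hdiff : (∑' n : ℕ, x ^ (n + 1) / (Nat.factorial (n + 1) : ℝ) * a (n + 1))
      - (Real.exp x - 1) * L
      = ∑' n : ℕ, x ^ (n + 1) / (Nat.factorial (n + 1) : ℝ) * (a (n + 1) - L) := by
    rw [← exp_sub_one_eq x, ← tsum_mul_right, ← Summable.tsum_sub hsa (hWsum.mul_right L)]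
    exact tsum_congr fun n => by ring
  have habs : |∑' n : ℕ, x ^ (n + 1) / (Nat.factorial (n + 1) : ℝ) * (a (n + 1) - L)|
      ≤ ∑' n : ℕ, x ^ (n + 1) / (Nat.factorial (n + 1) : ℝ) * |a (n + 1) - L| := by
    have hnorm : Summable (fun n : ℕ =>
        ‖x ^ (n + 1) / (Nat.factorial (n + 1) : ℝ) * (a (n + 1) - L)‖) := by
      refine hsb.congr fun n => ?_
      rw [Real.norm_eq_abs, abs_mul, abs_of_nonneg (hw n)]
    have := norm_tsum_le_tsum_norm hnorm
    rw [Real.norm_eq_abs] at this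
    refine this.trans_eq (tsum_congr fun n => ?_)
    rw [Real.norm_eq_abs, abs_mul, abs_of_nonneg (hw n)]
  rw [Real.dist_eq]
  have heq : (Real.exp x - 1)⁻¹ *
        (∑' n : ℕ, x ^ (n + 1) / (Nat.factorial (n + 1) : ℝ) * a (n + 1)) - L
      = (Real.exp x - 1)⁻¹ *
        ((∑' n : ℕ, x ^ (n + 1) / (Nat.factorial (n + 1) : ℝ) * a (n + 1))
          - (Real.exp x - 1) * L) := by
    field_simp
  rw [heq, hdiff, abs_mul, abs_of_nonneg (inv_nonneg.2 hE.le)]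
  exact mul_le_mul_of_nonneg_left habs (inv_nonneg.2 hE.le)

private lemma pow_stoch (H : ℕ) (M : Matrix (Fin H) (Fin H) ℝ)
    (hpos : ∀ i j, 0 ≤ M i j) (hrow : ∀ i, ∑ j, M i j = 1) (n : ℕ) :
    (∀ i j, 0 ≤ (M ^ n) i j) ∧ ∀ i, ∑ j, (M ^ n) i j = 1 := by
  induction n with
  | zero =>
    constructor
    · intro i j
      by_cases h : i = j <;> simp [pow_zero, Matrix.one_apply, h]
    · intro i
      simp [pow_zero, Matrix.one_apply]
  | succ n ih =>
    rw [pow_succ]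
    constructor
    · intro i j
      rw [Matrix.mul_apply]
      exact Finset.sum_nonneg fun k _ => mul_nonneg (ih.1 i k) (hpos k j)
    · intro i
      simp only [Matrix.mul_apply]
      rw [Finset.sum_comm]
      calc (∑ k, ∑ j, (M ^ n) i k * M k j) = ∑ k, (M ^ n) i k * ∑ j, M k j := by
            refine Finset.sum_congr rfl fun k _ => ?_
            rw [Finset.mul_sum]
        _ = ∑ k, (M ^ n) i k := by
            refine Finset.sum_congr rfl fun k _ => ?_
            rw [hrow k, mul_one]
        _ = 1 := ih.2 i

private lemma exp_entry (H : ℕ) (A : Matrix (Fin H) (Fin H) ℝ) (i j : Fin H) :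
    NormedSpace.exp A i j = ∑' n : ℕ, ((Nat.factorial n : ℝ))⁻¹ * (A ^ n) i j := by
  letI : SeminormedRing (Matrix (Fin H) (Fin H) ℝ) := Matrix.linftyOpSemiNormedRing
  letI : NormedRing (Matrix (Fin H) (Fin H) ℝ) := Matrix.linftyOpNormedRing
  letI : NormedAlgebra ℝ (Matrix (Fin H) (Fin H) ℝ) := Matrix.linftyOpNormedAlgebra
  have hs : Summable fun n : ℕ => ((Nat.factorial n : ℝ))⁻¹ • A ^ n :=
    NormedSpace.expSeries_summable' (𝕂 := ℝ) A
  rw [NormedSpace.exp_eq_tsum (𝕂 := ℝ)]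
  show (∑' n : ℕ, ((Nat.factorial n : ℝ))⁻¹ • A ^ n) i j = _
  erw [tsum_apply hs, tsum_apply]
  · rfl
  · exact (Pi.summable.1 hs i).congr fun n => rfl

/-- If the powers of a positive stochastic matrix `M` converge entrywise to `Mbar`, then
each entry of `M(x) = (exp(xM) - I)/(eˣ - 1)` converges to the corresponding entry of `Mbar`
as `x → +∞`. -/
theorem stmt1 (H : ℕ) (hH : 1 ≤ H) (M Mbar : Matrix (Fin H) (Fin H) ℝ)
    (hpos : ∀ i j, 0 < M i j) (hrow : ∀ i, ∑ j, M i j = 1)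
    (hconv : ∀ i j, Tendsto (fun μ : ℕ => (M ^ μ) i j) atTop (nhds (Mbar i j)))
    (i j : Fin H) :
    Tendsto (fun x : ℝ => ((Real.exp x - 1)⁻¹ • (NormedSpace.exp (x • M) - 1)) i j)
      atTop (nhds (Mbar i j)) := by
  have hst := pow_stoch H M (fun i j => (hpos i j).le) hrow
  have hC : ∀ n : ℕ, |(M ^ n) i j| ≤ 1 := by
    intro n
    rw [abs_of_nonneg ((hst n).1 i j)]
    calc (M ^ n) i j ≤ ∑ j', (M ^ n) i j' :=
          Finset.single_le_sum (fun k _ => (hst n).1 i k) (Finset.mem_univ j)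
      _ = 1 := (hst n).2 i
  have ha1 : Tendsto (fun n : ℕ => (M ^ (n + 1)) i j) atTop (nhds (Mbar i j)) :=
    (hconv i j).comp (tendsto_add_atTop_nat 1)
  have hkey := key1 (fun n => (M ^ n) i j) 1 hC (Mbar i j) ha1
  refine hkey.congr fun x => ?_
  have hsax : Summable (fun n : ℕ => x ^ n / (Nat.factorial n : ℝ) * (M ^ n) i j) := by
    refine Summable.of_norm_bounded (Real.summable_pow_div_factorial |x|) fun n => ?_
    rw [Real.norm_eq_abs, abs_mul, abs_div, abs_pow, Nat.abs_cast]
    calc |x| ^ n / (Nat.factorial n : ℝ) * |(M ^ n) i j|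
        ≤ |x| ^ n / (Nat.factorial n : ℝ) * 1 :=
          mul_le_mul_of_nonneg_left (hC n)
            (div_nonneg (pow_nonneg (abs_nonneg x) n) (Nat.cast_nonneg _))
      _ = |x| ^ n / (Nat.factorial n : ℝ) := mul_one _
  have hEntry : NormedSpace.exp (x • M) i j
      = ∑' n : ℕ, x ^ n / (Nat.factorial n : ℝ) * (M ^ n) i j := by
    rw [exp_entry]
    refine tsum_congr fun n => ?_
    rw [smul_pow, Matrix.smul_apply, smul_eq_mul]
    ring
  have hzero : (∑' n : ℕ, x ^ n / (Nat.factorial n : ℝ) * (M ^ n) i j)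
      = (1 : Matrix (Fin H) (Fin H) ℝ) i j
        + ∑' n : ℕ, x ^ (n + 1) / (Nat.factorial (n + 1) : ℝ) * (M ^ (n + 1)) i j := by
    rw [Summable.tsum_eq_zero_add hsax]
    congr 1
    simp
  show (Real.exp x - 1)⁻¹ * ∑' n : ℕ, x ^ (n + 1) / (Nat.factorial (n + 1) : ℝ) * (M ^ (n + 1)) i j
      = _
  simp only [Matrix.smul_apply, Matrix.sub_apply, smul_eq_mul]
  rw [hEntry, hzero]
  ring
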